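/- If Δ is a strongly commensuristic subgroup of a group Γ (meaning every isomorphism φ : Γ₁ → Γ₂ between finite-index subgroups of Γ satisfies φ(Δ ∩ Γ₁) = Δ ∩ Γ₂), then there is a natural group homomorphism from Comm(Γ) to Comm(Γ/Δ) when Δ is normal in Γ. -/
import Mathlib


/-- A partial automorphism of a group `Γ`: an isomorphism between finite-index
subgroups `dom` and `cod`, recorded as a total function that is multiplicative
and bijective from `dom` onto `cod`. -/
structure PartialIso (Γ : Type*) [Group Γ] where
  dom : Subgroup Γ
  cod : Subgroup Γ
  findom : dom.FiniteIndex
  fincod : cod.FiniteIndex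
  toFun : Γ → Γ
  maps : ∀ x ∈ dom, toFun x ∈ cod
  mul : ∀ x ∈ dom, ∀ y ∈ dom, toFun (x * y) = toFun x * toFun y
  bij : Set.BijOn toFun dom cod

/-- Two partial automorphisms are equivalent if they agree on a finite-index subgroup. -/
def PartialIso.Equiv {Γ : Type*} [Group Γ] (φ ψ : PartialIso Γ) : Prop :=
  ∃ Δ : Subgroup Γ, Δ.FiniteIndex ∧ Δ ≤ φ.dom ∧ Δ ≤ ψ.dom ∧
    ∀ x ∈ Δ, φ.toFun x = ψ.toFun x

/-- `χ` represents the composition (first `ψ`, then `φ`) of the commensurations of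
`φ` and `ψ`: they agree on a finite-index subgroup. -/
def PartialIso.IsComp {Γ : Type*} [Group Γ] (χ φ ψ : PartialIso Γ) : Prop :=
  ∃ Δ : Subgroup Γ, Δ.FiniteIndex ∧ Δ ≤ ψ.dom ∧ Δ ≤ χ.dom ∧
    ∀ x ∈ Δ, ψ.toFun x ∈ φ.dom ∧ χ.toFun x = φ.toFun (ψ.toFun x)

namespace PartialIso
variable {Γ : Type*} [Group Γ]

theorem toFun_one' (φ : PartialIso Γ) : φ.toFun 1 = 1 := by
  have h := φ.mul 1 φ.dom.one_mem 1 φ.dom.one_mem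
  rw [one_mul] at h
  exact (mul_left_cancel (a := φ.toFun 1) (by rw [mul_one, ← h])).symm

theorem toFun_inv' (φ : PartialIso Γ) {x : Γ} (hx : x ∈ φ.dom) :
    φ.toFun x⁻¹ = (φ.toFun x)⁻¹ := by
  have h := φ.mul x⁻¹ (φ.dom.inv_mem hx) x hx
  rw [inv_mul_cancel, φ.toFun_one'] at h
  exact eq_inv_of_mul_eq_one_left h.symm

attribute [local instance] Classical.propDecidable

variable (Δ : Subgroup Γ) [Δ.Normal] (φ : PartialIso Γ)

theorem mk_congr (h : φ.toFun '' ((Δ : Set Γ) ∩ (φ.dom : Set Γ)) = (Δ : Set Γ) ∩ (φ.cod : Set Γ)) {x y : Γ} (hx : x ∈ φ.dom) (hy : y ∈ φ.dom)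
    (hxy : (QuotientGroup.mk x : Γ ⧸ Δ) = QuotientGroup.mk y) :
    (QuotientGroup.mk (φ.toFun x) : Γ ⧸ Δ) = QuotientGroup.mk (φ.toFun y) := by
  rw [QuotientGroup.eq] at hxy ⊢
  have hd : x⁻¹ * y ∈ φ.dom := φ.dom.mul_mem (φ.dom.inv_mem hx) hy
  have : φ.toFun (x⁻¹ * y) ∈ (Δ : Set Γ) ∩ (φ.cod : Set Γ) := by
    rw [← h]; exact ⟨x⁻¹ * y, ⟨hxy, hd⟩, rfl⟩
  have heq : φ.toFun (x⁻¹ * y) = (φ.toFun x)⁻¹ * φ.toFun y := by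
    rw [φ.mul _ (φ.dom.inv_mem hx) _ hy, φ.toFun_inv' hx]
  rw [heq] at this
  exact this.1

theorem mem_of_toFun_mem (h : φ.toFun '' ((Δ : Set Γ) ∩ (φ.dom : Set Γ)) = (Δ : Set Γ) ∩ (φ.cod : Set Γ)) {x : Γ} (hx : x ∈ φ.dom) (hΔ : φ.toFun x ∈ Δ) : x ∈ Δ := by
  have : φ.toFun x ∈ (Δ : Set Γ) ∩ (φ.cod : Set Γ) := ⟨hΔ, φ.maps x hx⟩
  rw [← h] at this
  obtain ⟨w, ⟨hw, hwd⟩, hwe⟩ := this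
  rwa [← φ.bij.injOn hwd hx hwe]

noncomputable def quot (h : φ.toFun '' ((Δ : Set Γ) ∩ (φ.dom : Set Γ)) = (Δ : Set Γ) ∩ (φ.cod : Set Γ)) : PartialIso (Γ ⧸ Δ) where
  dom := φ.dom.map (QuotientGroup.mk' Δ)
  cod := φ.cod.map (QuotientGroup.mk' Δ)
  findom := by
    have h1 : ((φ.dom.map (QuotientGroup.mk' Δ)).comap (QuotientGroup.mk' Δ)).FiniteIndex := by
      have := φ.findom
      exact Subgroup.finiteIndex_of_le (Subgroup.le_comap_map _ _)
    constructor
    rw [← Subgroup.index_comap_of_surjective _ (QuotientGroup.mk'_surjective Δ)]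
    exact h1.index_ne_zero
  fincod := by
    have h1 : ((φ.cod.map (QuotientGroup.mk' Δ)).comap (QuotientGroup.mk' Δ)).FiniteIndex := by
      have := φ.fincod
      exact Subgroup.finiteIndex_of_le (Subgroup.le_comap_map _ _)
    constructor
    rw [← Subgroup.index_comap_of_surjective _ (QuotientGroup.mk'_surjective Δ)]
    exact h1.index_ne_zero
  toFun := fun q =>
    if hq : ∃ x, x ∈ φ.dom ∧ QuotientGroup.mk x = q
    then QuotientGroup.mk (φ.toFun hq.choose) else 1
  maps := by
    rintro q ⟨x, hx, rfl⟩
    have hq : ∃ y, y ∈ φ.dom ∧ (QuotientGroup.mk y : Γ ⧸ Δ) = QuotientGroup.mk' Δ x :=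
      ⟨x, hx, rfl⟩
    beta_reduce
    rw [dif_pos hq]
    exact ⟨φ.toFun hq.choose, φ.maps _ hq.choose_spec.1, rfl⟩
  mul := by
    rintro q1 ⟨x1, hx1, rfl⟩ q2 ⟨x2, hx2, rfl⟩
    have hq1 : ∃ y, y ∈ φ.dom ∧ (QuotientGroup.mk y : Γ ⧸ Δ) = QuotientGroup.mk' Δ x1 :=
      ⟨x1, hx1, rfl⟩
    have hq2 : ∃ y, y ∈ φ.dom ∧ (QuotientGroup.mk y : Γ ⧸ Δ) = QuotientGroup.mk' Δ x2 :=
      ⟨x2, hx2, rfl⟩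
    have hq12 : ∃ y, y ∈ φ.dom ∧
        (QuotientGroup.mk y : Γ ⧸ Δ) = QuotientGroup.mk' Δ x1 * QuotientGroup.mk' Δ x2 :=
      ⟨x1 * x2, φ.dom.mul_mem hx1 hx2, rfl⟩
    beta_reduce
    rw [dif_pos hq1, dif_pos hq2, dif_pos hq12]
    have e1 := φ.mk_congr Δ h hq12.choose_spec.1 (φ.dom.mul_mem hx1 hx2)
      (by rw [hq12.choose_spec.2]; rfl)
    have e2 := φ.mk_congr Δ h hq1.choose_spec.1 hx1 hq1.choose_spec.2
    have e3 := φ.mk_congr Δ h hq2.choose_spec.1 hx2 hq2.choose_spec.2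
    rw [e1, e2, e3, φ.mul _ hx1 _ hx2]
    rfl
  bij := by
    constructor
    · rintro q ⟨x, hx, rfl⟩
      have hq : ∃ y, y ∈ φ.dom ∧ (QuotientGroup.mk y : Γ ⧸ Δ) = QuotientGroup.mk' Δ x :=
        ⟨x, hx, rfl⟩
      beta_reduce
      rw [dif_pos hq]
      exact ⟨φ.toFun hq.choose, φ.maps _ hq.choose_spec.1, rfl⟩
    constructor
    · rintro q1 ⟨x1, hx1, rfl⟩ q2 ⟨x2, hx2, rfl⟩ heq
      have hq1 : ∃ y, y ∈ φ.dom ∧ (QuotientGroup.mk y : Γ ⧸ Δ) = QuotientGroup.mk' Δ x1 :=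
        ⟨x1, hx1, rfl⟩
      have hq2 : ∃ y, y ∈ φ.dom ∧ (QuotientGroup.mk y : Γ ⧸ Δ) = QuotientGroup.mk' Δ x2 :=
        ⟨x2, hx2, rfl⟩
      simp only [dif_pos hq1, dif_pos hq2] at heq
      have e1 := φ.mk_congr Δ h hq1.choose_spec.1 hx1 hq1.choose_spec.2
      have e2 := φ.mk_congr Δ h hq2.choose_spec.1 hx2 hq2.choose_spec.2
      rw [e1, e2, QuotientGroup.eq] at heq
      rw [← φ.toFun_inv' hx1, ← φ.mul _ (φ.dom.inv_mem hx1) _ hx2] at heq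
      have := φ.mem_of_toFun_mem Δ h (φ.dom.mul_mem (φ.dom.inv_mem hx1) hx2) heq
      show (QuotientGroup.mk x1 : Γ ⧸ Δ) = QuotientGroup.mk x2
      rw [QuotientGroup.eq]; exact this
    · rintro q ⟨c, hc, rfl⟩
      obtain ⟨x, hx, rfl⟩ := φ.bij.surjOn hc
      refine ⟨QuotientGroup.mk' Δ x, ⟨x, hx, rfl⟩, ?_⟩
      have hq : ∃ y, y ∈ φ.dom ∧ (QuotientGroup.mk y : Γ ⧸ Δ) = QuotientGroup.mk' Δ x :=
        ⟨x, hx, rfl⟩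
      beta_reduce
      rw [dif_pos hq]
      exact φ.mk_congr Δ h hq.choose_spec.1 hx hq.choose_spec.2

theorem quot_apply (h : φ.toFun '' ((Δ : Set Γ) ∩ (φ.dom : Set Γ)) = (Δ : Set Γ) ∩ (φ.cod : Set Γ)) {x : Γ} (hx : x ∈ φ.dom) :
    (φ.quot Δ h).toFun (QuotientGroup.mk x) = QuotientGroup.mk (φ.toFun x) := by
  have hq : ∃ y, y ∈ φ.dom ∧ (QuotientGroup.mk y : Γ ⧸ Δ) = QuotientGroup.mk x :=
    ⟨x, hx, rfl⟩
  show (if hq' : _ then _ else _) = _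
  rw [dif_pos hq]
  exact φ.mk_congr Δ h hq.choose_spec.1 hx hq.choose_spec.2

end PartialIso


theorem map_finiteIndex' {Γ : Type*} [Group Γ] (Δ : Subgroup Γ) [Δ.Normal]
    (Δ' : Subgroup Γ) (hfi : Δ'.FiniteIndex) :
    (Δ'.map (QuotientGroup.mk' Δ)).FiniteIndex := by
  haveI := hfi
  constructor
  rw [← Subgroup.index_comap_of_surjective _ (QuotientGroup.mk'_surjective Δ)]
  exact (Subgroup.finiteIndex_of_le (Subgroup.le_comap_map _ _)).index_ne_zero

/-- If `Δ` is a normal, strongly commensuristic subgroup of `Γ`, there is a natural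
homomorphism `Comm(Γ) → Comm(Γ/Δ)`: a map on partial automorphisms respecting
equivalence and composition, compatible with the quotient projection. -/
theorem comm_map_of_strongly_commensuristic
    (Γ : Type*) [Group Γ] (Δ : Subgroup Γ) [Δ.Normal]
    (hsc : ∀ φ : PartialIso Γ,
      φ.toFun '' ((Δ : Set Γ) ∩ (φ.dom : Set Γ)) = (Δ : Set Γ) ∩ (φ.cod : Set Γ)) :
    ∃ F : PartialIso Γ → PartialIso (Γ ⧸ Δ),
      (∀ φ ψ, PartialIso.Equiv φ ψ → PartialIso.Equiv (F φ) (F ψ)) ∧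
      (∀ χ φ ψ, PartialIso.IsComp χ φ ψ → PartialIso.IsComp (F χ) (F φ) (F ψ)) ∧
      (∀ φ : PartialIso Γ, ∀ x ∈ φ.dom,
        (F φ).toFun (QuotientGroup.mk x) = QuotientGroup.mk (φ.toFun x)) := by
  refine ⟨fun φ => φ.quot Δ (hsc φ), ?_, ?_, ?_⟩
  · rintro φ ψ ⟨Δ', hfi, h1, h2, hag⟩
    refine ⟨Δ'.map (QuotientGroup.mk' Δ), map_finiteIndex' Δ Δ' hfi,
      Subgroup.map_mono h1, Subgroup.map_mono h2, ?_⟩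
    rintro q ⟨x, hx, rfl⟩
    rw [QuotientGroup.mk'_apply, φ.quot_apply Δ (hsc φ) (h1 hx),
      ψ.quot_apply Δ (hsc ψ) (h2 hx), hag x hx]
  · rintro χ φ ψ ⟨Δ', hfi, h1, h2, hcomp⟩
    refine ⟨Δ'.map (QuotientGroup.mk' Δ), map_finiteIndex' Δ Δ' hfi,
      Subgroup.map_mono h1, Subgroup.map_mono h2, ?_⟩
    rintro q ⟨x, hx, rfl⟩
    obtain ⟨hmem, heq⟩ := hcomp x hx
    rw [QuotientGroup.mk'_apply]
    refine ⟨?_, ?_⟩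
    · rw [ψ.quot_apply Δ (hsc ψ) (h1 hx)]
      exact ⟨ψ.toFun x, hmem, rfl⟩
    · rw [χ.quot_apply Δ (hsc χ) (h2 hx), heq, ψ.quot_apply Δ (hsc ψ) (h1 hx),
        φ.quot_apply Δ (hsc φ) hmem]
  · exact fun φ x hx => φ.quot_apply Δ (hsc φ) hx
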